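/- Let z₁, z₂ be standard Gaussians with correlation ρ ∈ (−1,1), and let a, b ∈ ℝ. Define T₁ = exp(−a²/2)·Φ((ρa−b)/√(1−ρ²)) and T₂ = exp(−b²/2)·Φ((ρb−a)/√(1−ρ²)). Then E[z₁ · 1{z₁ ≥ a, z₂ ≥ b}] = (1/√(2π))·(T₁ + ρT₂). -/

import Mathlib

open MeasureTheory Real

/-- The standard normal probability density function. -/
noncomputable def stdGaussianPDF (t : ℝ) : ℝ :=
  (Real.sqrt (2 * Real.pi))⁻¹ * Real.exp (-t ^ 2 / 2)

/-- The standard normal cumulative distribution function. -/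
noncomputable def stdNormalCDF (x : ℝ) : ℝ :=
  ∫ t in Set.Iic x, stdGaussianPDF t

/-- Density of the bivariate standard Gaussian with correlation `ρ`. -/
noncomputable def bivStdGaussianPDF (ρ x y : ℝ) : ℝ :=
  (2 * Real.pi * Real.sqrt (1 - ρ ^ 2))⁻¹ *
    Real.exp (-(x ^ 2 - 2 * ρ * x * y + y ^ 2) / (2 * (1 - ρ ^ 2)))

open Set Filter

lemma biv_symm (ρ x y : ℝ) : bivStdGaussianPDF ρ x y = bivStdGaussianPDF ρ y x := by
  unfold bivStdGaussianPDF; ring_nf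

lemma biv_nonneg (ρ x y : ℝ) : 0 ≤ bivStdGaussianPDF ρ x y := by
  unfold bivStdGaussianPDF; positivity

lemma biv_factor {ρ : ℝ} (h1 : 0 < 1 - ρ ^ 2) (x y : ℝ) :
    bivStdGaussianPDF ρ x y =
      stdGaussianPDF y *
        ((Real.sqrt (1 - ρ ^ 2))⁻¹ * stdGaussianPDF ((x - ρ * y) / Real.sqrt (1 - ρ ^ 2))) := by
  have hσ : (0:ℝ) < Real.sqrt (1 - ρ ^ 2) := Real.sqrt_pos.mpr h1
  have hσ2 : Real.sqrt (1 - ρ ^ 2) ^ 2 = 1 - ρ ^ 2 := Real.sq_sqrt h1.le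
  have h2π : Real.sqrt (2 * Real.pi) ^ 2 = 2 * Real.pi := Real.sq_sqrt (by positivity)
  unfold bivStdGaussianPDF stdGaussianPDF
  have hexp : Real.exp (-y ^ 2 / 2) * Real.exp (-((x - ρ * y) / Real.sqrt (1 - ρ ^ 2)) ^ 2 / 2)
      = Real.exp (-(x ^ 2 - 2 * ρ * x * y + y ^ 2) / (2 * (1 - ρ ^ 2))) := by
    rw [← Real.exp_add]
    congr 1
    rw [div_pow, hσ2]
    field_simp
    ring
  calc (2 * Real.pi * Real.sqrt (1 - ρ ^ 2))⁻¹ *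
        Real.exp (-(x ^ 2 - 2 * ρ * x * y + y ^ 2) / (2 * (1 - ρ ^ 2)))
      = (2 * Real.pi * Real.sqrt (1 - ρ ^ 2))⁻¹ *
        (Real.exp (-y ^ 2 / 2) * Real.exp (-((x - ρ * y) / Real.sqrt (1 - ρ ^ 2)) ^ 2 / 2)) := by
        rw [hexp]
    _ = _ := by
        rw [show (2:ℝ) * Real.pi = Real.sqrt (2 * Real.pi) ^ 2 from h2π.symm]
        field_simp
        ring_nf; rw [Real.sqrt_sq (Real.sqrt_nonneg _)]

lemma gauss_tail {σ : ℝ} (hσ : 0 < σ) (μ c : ℝ) :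
    (∫ y in Set.Ici c, σ⁻¹ * stdGaussianPDF ((y - μ) / σ)) = stdNormalCDF ((μ - c) / σ) := by
  have himg : (fun t => μ - σ * t) '' Set.Iic ((μ - c) / σ) = Set.Ici c := by
    ext x
    constructor
    · rintro ⟨t, ht, rfl⟩
      simp only [Set.mem_Iic] at ht
      simp only [Set.mem_Ici]
      have h2 : σ * t ≤ σ * ((μ - c) / σ) := mul_le_mul_of_nonneg_left ht hσ.le
      rw [mul_div_cancel₀ _ hσ.ne'] at h2
      linarith
    · intro hx
      refine ⟨(μ - x) / σ, ?_, ?_⟩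
      · simp only [Set.mem_Iic]
        have : μ - x ≤ μ - c := by simp only [Set.mem_Ici] at hx; linarith
        exact (div_le_div_iff_of_pos_right hσ).mpr this
      · field_simp; ring
  have hd : ∀ t ∈ Set.Iic ((μ - c) / σ), HasDerivWithinAt (fun t => μ - σ * t) (-σ)
      (Set.Iic ((μ - c) / σ)) t := by
    intro t _
    simpa using ((hasDerivAt_id t).const_mul σ).const_sub μ |>.hasDerivWithinAt
  have hinj : Set.InjOn (fun t => μ - σ * t) (Set.Iic ((μ - c) / σ)) := by
    intro t₁ _ t₂ _ h
    simp only at h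
    have : σ * t₁ = σ * t₂ := by linarith
    exact mul_left_cancel₀ hσ.ne' this
  rw [← himg, integral_image_eq_integral_abs_deriv_smul measurableSet_Iic hd hinj]
  have : ∀ t : ℝ, |(-σ)| • (σ⁻¹ * stdGaussianPDF ((μ - σ * t - μ) / σ)) = stdGaussianPDF t := by
    intro t
    have h1 : (μ - σ * t - μ) / σ = -t := by field_simp; ring
    rw [h1, abs_neg, abs_of_pos hσ]
    have h2 : stdGaussianPDF (-t) = stdGaussianPDF t := by unfold stdGaussianPDF; ring_nf
    rw [h2, smul_eq_mul]
    field_simp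
  simp only [this]
  rfl

lemma marginal {ρ : ℝ} (h1 : 0 < 1 - ρ ^ 2) (a b : ℝ) :
    (∫ y in Set.Ici b, bivStdGaussianPDF ρ a y) =
      stdGaussianPDF a * stdNormalCDF ((ρ * a - b) / Real.sqrt (1 - ρ ^ 2)) := by
  have hσ : (0:ℝ) < Real.sqrt (1 - ρ ^ 2) := Real.sqrt_pos.mpr h1
  have : ∀ y : ℝ, bivStdGaussianPDF ρ a y =
      stdGaussianPDF a *
        ((Real.sqrt (1 - ρ ^ 2))⁻¹ * stdGaussianPDF ((y - ρ * a) / Real.sqrt (1 - ρ ^ 2))) := by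
    intro y
    rw [biv_symm, biv_factor h1]
  simp only [this]
  rw [integral_const_mul]
  congr 1
  exact gauss_tail hσ (ρ * a) b

lemma biv_hasDeriv {ρ : ℝ} (h1 : 0 < 1 - ρ ^ 2) (y x : ℝ) :
    HasDerivAt (fun x => -bivStdGaussianPDF ρ x y)
      ((x - ρ * y) / (1 - ρ ^ 2) * bivStdGaussianPDF ρ x y) x := by
  have hu : HasDerivAt (fun x : ℝ => -(x ^ 2 - 2 * ρ * x * y + y ^ 2) / (2 * (1 - ρ ^ 2)))
      (-(2 * x - 2 * ρ * y) / (2 * (1 - ρ ^ 2))) x := by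
    have h : HasDerivAt (fun x : ℝ => x ^ 2 - 2 * ρ * x * y + y ^ 2) (2 * x - 2 * ρ * y) x := by
      have := (((hasDerivAt_pow 2 x)).sub (((hasDerivAt_id x).const_mul (2 * ρ)).mul_const y)).add_const (y ^ 2)
      refine this.congr_deriv ?_
      ring
    simpa [neg_div] using (h.neg.div_const (2 * (1 - ρ ^ 2)))
  have := ((hu.exp).const_mul ((2 * Real.pi * Real.sqrt (1 - ρ ^ 2))⁻¹)).neg
  refine this.congr_deriv ?_
  have h2 : (1 - ρ ^ 2) ≠ 0 := ne_of_gt h1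
  unfold bivStdGaussianPDF
  field_simp

lemma biv_tendsto {ρ : ℝ} (h1 : 0 < 1 - ρ ^ 2) (y : ℝ) :
    Filter.Tendsto (fun x => -bivStdGaussianPDF ρ x y) Filter.atTop (nhds 0) := by
  have hσ : (0:ℝ) < Real.sqrt (1 - ρ ^ 2) := Real.sqrt_pos.mpr h1
  have hpdf : Filter.Tendsto stdGaussianPDF Filter.atTop (nhds 0) := by
    unfold stdGaussianPDF
    rw [show (0:ℝ) = (Real.sqrt (2 * Real.pi))⁻¹ * 0 by ring]
    apply Filter.Tendsto.const_mul
    apply Real.tendsto_exp_atBot.comp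
    apply Filter.Tendsto.atBot_div_const (by norm_num : (0:ℝ) < 2)
    exact tendsto_neg_atBot_iff.mpr (tendsto_pow_atTop two_ne_zero)
  have harg : Filter.Tendsto (fun x : ℝ => (x - ρ * y) / Real.sqrt (1 - ρ ^ 2))
      Filter.atTop Filter.atTop :=
    (Filter.tendsto_atTop_add_const_right _ (-(ρ * y)) Filter.tendsto_id).atTop_div_const hσ
      |>.congr (fun x => by simp only [id_eq]; ring)
  have := ((hpdf.comp harg).const_mul ((Real.sqrt (1 - ρ ^ 2))⁻¹)).const_mul (stdGaussianPDF y)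
  simp only [mul_zero] at this
  have h3 : (fun x => -bivStdGaussianPDF ρ x y) =
      fun x => -(stdGaussianPDF y * ((Real.sqrt (1 - ρ ^ 2))⁻¹ *
        stdGaussianPDF ((x - ρ * y) / Real.sqrt (1 - ρ ^ 2)))) := by
    funext x; rw [biv_factor h1]
  rw [h3]
  simpa using this.neg

lemma integrable_ftc {ρ : ℝ} (h1 : 0 < 1 - ρ ^ 2) (y : ℝ) :
    MeasureTheory.Integrable (fun x => (x - ρ * y) / (1 - ρ ^ 2) * bivStdGaussianPDF ρ x y) := by
  have hσ : (0:ℝ) < Real.sqrt (1 - ρ ^ 2) := Real.sqrt_pos.mpr h1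
  have hσ2 : Real.sqrt (1 - ρ ^ 2) ^ 2 = 1 - ρ ^ 2 := Real.sq_sqrt h1.le
  set b : ℝ := (2 * (1 - ρ ^ 2))⁻¹ with hb
  have hbpos : 0 < b := by positivity
  have base : MeasureTheory.Integrable (fun x : ℝ => x * Real.exp (-b * x ^ 2)) :=
    integrable_mul_exp_neg_mul_sq hbpos
  have shifted : MeasureTheory.Integrable
      (fun x : ℝ => (x - ρ * y) * Real.exp (-b * (x - ρ * y) ^ 2)) :=
    base.comp_sub_right (ρ * y)
  have key := shifted.const_mul
    (stdGaussianPDF y * (Real.sqrt (1 - ρ ^ 2))⁻¹ * (Real.sqrt (2 * Real.pi))⁻¹ * (1 - ρ ^ 2)⁻¹)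
  have heq : (fun x => (x - ρ * y) / (1 - ρ ^ 2) * bivStdGaussianPDF ρ x y)
      = fun x => (stdGaussianPDF y * (Real.sqrt (1 - ρ ^ 2))⁻¹ * (Real.sqrt (2 * Real.pi))⁻¹ *
          (1 - ρ ^ 2)⁻¹) * ((x - ρ * y) * Real.exp (-b * (x - ρ * y) ^ 2)) := by
    funext x
    rw [biv_factor h1]
    have hE : Real.exp (-((x - ρ * y) / Real.sqrt (1 - ρ ^ 2)) ^ 2 / 2)
        = Real.exp (-b * (x - ρ * y) ^ 2) := by
      congr 1
      rw [div_pow, hσ2, hb]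
      field_simp
    conv_lhs => rw [show stdGaussianPDF ((x - ρ * y) / Real.sqrt (1 - ρ ^ 2))
      = (Real.sqrt (2 * Real.pi))⁻¹ * Real.exp (-b * (x - ρ * y) ^ 2) by
        unfold stdGaussianPDF; rw [hE]]
    ring
  rw [heq]
  exact key

lemma ftc {ρ : ℝ} (h1 : 0 < 1 - ρ ^ 2) (c t : ℝ) :
    (∫ x in Set.Ici c, (x - ρ * t) / (1 - ρ ^ 2) * bivStdGaussianPDF ρ x t)
      = bivStdGaussianPDF ρ c t := by
  rw [MeasureTheory.integral_Ici_eq_integral_Ioi]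
  have := integral_Ioi_of_hasDerivAt_of_tendsto' (a := c)
    (f := fun x => -bivStdGaussianPDF ρ x t)
    (f' := fun x => (x - ρ * t) / (1 - ρ ^ 2) * bivStdGaussianPDF ρ x t)
    (fun x _ => biv_hasDeriv h1 t x)
    ((integrable_ftc h1 t).integrableOn) (biv_tendsto h1 t)
  simpa using this

lemma biv_le {ρ : ℝ} (h1 : 0 < 1 - ρ ^ 2) (x y : ℝ) :
    bivStdGaussianPDF ρ x y ≤
      (2 * Real.pi * Real.sqrt (1 - ρ ^ 2))⁻¹ *
        (Real.exp (-(2 * (1 + |ρ|))⁻¹ * x ^ 2) * Real.exp (-(2 * (1 + |ρ|))⁻¹ * y ^ 2)) := by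
  have hB : (0:ℝ) < 1 + |ρ| := by positivity
  have hA : (0:ℝ) < 1 - ρ ^ 2 := h1
  unfold bivStdGaussianPDF
  rw [← Real.exp_add]
  have hC : (0:ℝ) ≤ (2 * Real.pi * Real.sqrt (1 - ρ ^ 2))⁻¹ := by positivity
  apply mul_le_mul_of_nonneg_left _ hC
  rw [Real.exp_le_exp]
  have hu : (1 - |ρ|) * (x ^ 2 + y ^ 2) ≤ x ^ 2 - 2 * ρ * x * y + y ^ 2 := by
    nlinarith [le_abs_self (ρ * (x * y)), abs_mul ρ (x * y), abs_mul x y,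
      sq_abs x, sq_abs y, two_mul_le_add_sq |x| |y|, abs_nonneg ρ, abs_nonneg (x * y)]
  have hgoal : -(x ^ 2 - 2 * ρ * x * y + y ^ 2) / (2 * (1 - ρ ^ 2))
      ≤ -(x ^ 2 + y ^ 2) / (2 * (1 + |ρ|)) := by
    rw [div_le_div_iff₀ (by positivity) (by positivity)]
    nlinarith [hu, sq_abs ρ, hB, sq_nonneg x, sq_nonneg y]
  calc -(x ^ 2 - 2 * ρ * x * y + y ^ 2) / (2 * (1 - ρ ^ 2))
      ≤ -(x ^ 2 + y ^ 2) / (2 * (1 + |ρ|)) := hgoal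
    _ = -(2 * (1 + |ρ|))⁻¹ * x ^ 2 + -(2 * (1 + |ρ|))⁻¹ * y ^ 2 := by field_simp; ring

lemma integrable_h {c : ℝ} (hc : 0 < c) :
    MeasureTheory.Integrable (fun t : ℝ => (|t| + 1) * Real.exp (-c * t ^ 2)) := by
  have h1 : MeasureTheory.Integrable (fun t : ℝ => |t * Real.exp (-c * t ^ 2)|) :=
    (integrable_mul_exp_neg_mul_sq hc).abs
  have h2 : MeasureTheory.Integrable (fun t : ℝ => Real.exp (-c * t ^ 2)) :=
    integrable_exp_neg_mul_sq hc
  have := h1.add h2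
  apply this.congr
  filter_upwards with t
  simp only [Pi.add_apply]
  rw [abs_mul, abs_of_pos (Real.exp_pos _)]
  ring

lemma integrable_master {ρ : ℝ} (h1 : 0 < 1 - ρ ^ 2) {f : ℝ × ℝ → ℝ} (hf : Continuous f)
    {K : ℝ} (hK : 0 ≤ K)
    (hb : ∀ x y : ℝ, |f (x, y)| ≤ K * ((|x| + |y| + 1) * bivStdGaussianPDF ρ x y)) :
    MeasureTheory.Integrable f := by
  set c : ℝ := (2 * (1 + |ρ|))⁻¹ with hcdef
  have hc : 0 < c := by positivity
  set C : ℝ := (2 * Real.pi * Real.sqrt (1 - ρ ^ 2))⁻¹ with hCdef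
  have hC : 0 ≤ C := by positivity
  have hh := integrable_h hc
  have hH : MeasureTheory.Integrable
      (fun p : ℝ × ℝ => ((|p.1| + 1) * Real.exp (-c * p.1 ^ 2)) *
        ((|p.2| + 1) * Real.exp (-c * p.2 ^ 2))) := by
    rw [MeasureTheory.Measure.volume_eq_prod]
    exact hh.mul_prod hh
  apply ((hH.const_mul (K * C)).mono hf.aestronglyMeasurable)
  filter_upwards with p
  rcases p with ⟨x, y⟩
  have hbd := hb x y
  have hbl : bivStdGaussianPDF ρ x y ≤ C * (Real.exp (-c * x ^ 2) * Real.exp (-c * y ^ 2)) :=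
    biv_le h1 x y
  have hsum : (|x| + |y| + 1) ≤ (|x| + 1) * (|y| + 1) := by
    nlinarith [abs_nonneg x, abs_nonneg y, mul_nonneg (abs_nonneg x) (abs_nonneg y)]
  have hblnn : 0 ≤ bivStdGaussianPDF ρ x y := biv_nonneg ρ x y
  have step : |f (x, y)| ≤ K * C * (((|x| + 1) * Real.exp (-c * x ^ 2)) *
      ((|y| + 1) * Real.exp (-c * y ^ 2))) := by
    calc |f (x, y)| ≤ K * ((|x| + |y| + 1) * bivStdGaussianPDF ρ x y) := hbd
      _ ≤ K * (((|x| + 1) * (|y| + 1)) * (C * (Real.exp (-c * x ^ 2) * Real.exp (-c * y ^ 2)))) := by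
          apply mul_le_mul_of_nonneg_left _ hK
          apply mul_le_mul hsum hbl hblnn (by positivity)
      _ = K * C * (((|x| + 1) * Real.exp (-c * x ^ 2)) * ((|y| + 1) * Real.exp (-c * y ^ 2))) := by
          ring
  calc ‖f (x, y)‖ = |f (x, y)| := rfl
    _ ≤ K * C * (((|x| + 1) * Real.exp (-c * x ^ 2)) * ((|y| + 1) * Real.exp (-c * y ^ 2))) := step
    _ ≤ ‖K * C * (((|x| + 1) * Real.exp (-c * x ^ 2)) * ((|y| + 1) * Real.exp (-c * y ^ 2)))‖ :=
        le_abs_self _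

lemma biv_cont (ρ : ℝ) : Continuous (fun p : ℝ × ℝ => bivStdGaussianPDF ρ p.1 p.2) := by
  unfold bivStdGaussianPDF
  fun_prop

/-- For a bivariate standard Gaussian `(z₁, z₂)` with correlation `ρ ∈ (−1,1)`:
`E[z₁ 1{z₁ ≥ a, z₂ ≥ b}] = (1/√(2π)) (T₁ + ρ T₂)` where
`T₁ = exp(−a²/2) Φ((ρa−b)/√(1−ρ²))` and `T₂ = exp(−b²/2) Φ((ρb−a)/√(1−ρ²))`. -/
theorem first_order_truncated_bivariate (a b ρ : ℝ) (hρ : ρ ∈ Set.Ioo (-1 : ℝ) 1) :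
    (∫ p in Set.Ici a ×ˢ Set.Ici b, p.1 * bivStdGaussianPDF ρ p.1 p.2) =
      (Real.sqrt (2 * Real.pi))⁻¹ *
        (Real.exp (-a ^ 2 / 2) * stdNormalCDF ((ρ * a - b) / Real.sqrt (1 - ρ ^ 2)) +
          ρ * (Real.exp (-b ^ 2 / 2) *
            stdNormalCDF ((ρ * b - a) / Real.sqrt (1 - ρ ^ 2)))) := by
  obtain ⟨hρ1, hρ2⟩ := hρ
  have h1 : 0 < 1 - ρ ^ 2 := by nlinarith
  have h1ne : (1 - ρ ^ 2) ≠ 0 := ne_of_gt h1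
  have hρabs : |ρ| ≤ 1 := (abs_lt.mpr ⟨hρ1, hρ2⟩).le
  have hcont := biv_cont ρ
  -- the three integrands
  set f₀ : ℝ × ℝ → ℝ := fun p => p.1 * bivStdGaussianPDF ρ p.1 p.2 with hf₀
  set g₁ : ℝ × ℝ → ℝ :=
    fun p => (p.1 - ρ * p.2) / (1 - ρ ^ 2) * bivStdGaussianPDF ρ p.1 p.2 with hg₁
  set g₂ : ℝ × ℝ → ℝ :=
    fun p => ρ * ((p.2 - ρ * p.1) / (1 - ρ ^ 2) * bivStdGaussianPDF ρ p.1 p.2) with hg₂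
  -- integrability
  have hint1 : MeasureTheory.Integrable g₁ := by
    apply integrable_master h1
      (((continuous_fst.sub (continuous_const.mul continuous_snd)).div_const (1 - ρ ^ 2)).mul hcont)
      (K := (1 - ρ ^ 2)⁻¹) (by positivity)
    intro x y
    show |g₁ (x, y)| ≤ _
    simp only [hg₁]
    rw [abs_mul, abs_of_nonneg (biv_nonneg ρ x y), abs_div, abs_of_pos h1, div_eq_inv_mul,
      mul_assoc]
    apply mul_le_mul_of_nonneg_left _ (inv_nonneg.mpr h1.le)
    apply mul_le_mul_of_nonneg_right _ (biv_nonneg ρ x y)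
    calc |x - ρ * y| ≤ |x| + |ρ * y| := abs_sub x (ρ * y)
      _ = |x| + |ρ| * |y| := by rw [abs_mul]
      _ ≤ |x| + |y| + 1 := by nlinarith [abs_nonneg y, abs_nonneg x]
  have hint2 : MeasureTheory.Integrable g₂ := by
    apply integrable_master h1
      (continuous_const.mul
        (((continuous_snd.sub (continuous_const.mul continuous_fst)).div_const (1 - ρ ^ 2)).mul
          hcont))
      (K := (1 - ρ ^ 2)⁻¹) (by positivity)
    intro x y
    show |g₂ (x, y)| ≤ _
    simp only [hg₂]
    rw [abs_mul, abs_mul, abs_of_nonneg (biv_nonneg ρ x y), abs_div, abs_of_pos h1,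
      div_eq_inv_mul]
    have h2 : |ρ| * ((1 - ρ ^ 2)⁻¹ * |y - ρ * x| * bivStdGaussianPDF ρ x y)
        ≤ 1 * ((1 - ρ ^ 2)⁻¹ * ((|x| + |y| + 1) * bivStdGaussianPDF ρ x y)) := by
      apply mul_le_mul hρabs _
        (mul_nonneg (mul_nonneg (inv_nonneg.mpr h1.le) (abs_nonneg _)) (biv_nonneg ρ x y))
        (by norm_num)
      rw [mul_assoc]
      apply mul_le_mul_of_nonneg_left _ (inv_nonneg.mpr h1.le)
      apply mul_le_mul_of_nonneg_right _ (biv_nonneg ρ x y)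
      calc |y - ρ * x| ≤ |y| + |ρ * x| := abs_sub y (ρ * x)
        _ = |y| + |ρ| * |x| := by rw [abs_mul]
        _ ≤ |x| + |y| + 1 := by nlinarith [abs_nonneg y, abs_nonneg x]
    calc |ρ| * ((1 - ρ ^ 2)⁻¹ * |y - ρ * x| * bivStdGaussianPDF ρ x y)
        ≤ 1 * ((1 - ρ ^ 2)⁻¹ * ((|x| + |y| + 1) * bivStdGaussianPDF ρ x y)) := h2
      _ = (1 - ρ ^ 2)⁻¹ * ((|x| + |y| + 1) * bivStdGaussianPDF ρ x y) := by ring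
  -- split the integrand
  have hsplit : ∀ p : ℝ × ℝ, f₀ p = g₁ p + g₂ p := by
    intro p
    simp only [hf₀, hg₁, hg₂]
    field_simp
    ring
  have hfun : f₀ = fun p => g₁ p + g₂ p := funext hsplit
  have hstep1 : (∫ p in Set.Ici a ×ˢ Set.Ici b, f₀ p) =
      (∫ p in Set.Ici a ×ˢ Set.Ici b, g₁ p) + ∫ p in Set.Ici a ×ˢ Set.Ici b, g₂ p := by
    rw [hfun]
    exact MeasureTheory.integral_add hint1.integrableOn hint2.integrableOn
  -- piece 1 (Fubini, integrate x first)
  have hg₁int : MeasureTheory.Integrable g₁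
      ((volume.restrict (Set.Ici a)).prod (volume.restrict (Set.Ici b))) := by
    rw [MeasureTheory.Measure.prod_restrict, ← MeasureTheory.Measure.volume_eq_prod]
    exact hint1.integrableOn
  have e1 : (∫ p in Set.Ici a ×ˢ Set.Ici b, g₁ p) =
      ∫ y in Set.Ici b, ∫ x in Set.Ici a, g₁ (x, y) := by
    rw [MeasureTheory.Measure.volume_eq_prod, ← MeasureTheory.Measure.prod_restrict]
    exact MeasureTheory.integral_prod_symm g₁ hg₁int
  have e1' : (∫ p in Set.Ici a ×ˢ Set.Ici b, g₁ p) =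
      stdGaussianPDF a * stdNormalCDF ((ρ * a - b) / Real.sqrt (1 - ρ ^ 2)) := by
    rw [e1, ← marginal h1 a b]
    apply MeasureTheory.integral_congr_ae
    filter_upwards with y
    exact ftc h1 a y
  -- piece 2 (Fubini, integrate y first)
  have hg₂int : MeasureTheory.Integrable g₂
      ((volume.restrict (Set.Ici a)).prod (volume.restrict (Set.Ici b))) := by
    rw [MeasureTheory.Measure.prod_restrict, ← MeasureTheory.Measure.volume_eq_prod]
    exact hint2.integrableOn
  have e2 : (∫ p in Set.Ici a ×ˢ Set.Ici b, g₂ p) =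
      ∫ x in Set.Ici a, ∫ y in Set.Ici b, g₂ (x, y) := by
    rw [MeasureTheory.Measure.volume_eq_prod, ← MeasureTheory.Measure.prod_restrict]
    exact MeasureTheory.integral_prod g₂ hg₂int
  have inner2 : ∀ x : ℝ, (∫ y in Set.Ici b, g₂ (x, y)) = ρ * bivStdGaussianPDF ρ b x := by
    intro x
    have hfy : (fun y => g₂ (x, y)) =
        fun y => ρ * ((y - ρ * x) / (1 - ρ ^ 2) * bivStdGaussianPDF ρ y x) := by
      funext y
      simp only [hg₂]
      rw [biv_symm ρ x y]
    rw [hfy, MeasureTheory.integral_const_mul, ftc h1 b x]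
  have e2' : (∫ p in Set.Ici a ×ˢ Set.Ici b, g₂ p) =
      ρ * (stdGaussianPDF b * stdNormalCDF ((ρ * b - a) / Real.sqrt (1 - ρ ^ 2))) := by
    rw [e2]
    have : (∫ x in Set.Ici a, ∫ y in Set.Ici b, g₂ (x, y)) =
        ∫ x in Set.Ici a, ρ * bivStdGaussianPDF ρ b x := by
      apply MeasureTheory.integral_congr_ae
      filter_upwards with x
      exact inner2 x
    rw [this, MeasureTheory.integral_const_mul, ← marginal h1 b a]
  rw [show (∫ p in Set.Ici a ×ˢ Set.Ici b, p.1 * bivStdGaussianPDF ρ p.1 p.2)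
      = ∫ p in Set.Ici a ×ˢ Set.Ici b, f₀ p from rfl, hstep1, e1', e2']
  unfold stdGaussianPDF
  ring
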